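/- arXiv:2605.12692 — 2 statements merged into one kernel-verified Lean document; each statement's English description precedes it below -/
import Mathlib

section
/- Let n, m be positive integers and let ρ : Q_{n,m} → GL(V) be an irreducible quandle representation on a finite-dimensional complex vector space V with dim V ≥ 2. Then there exist an integer d > 1 dividing both n and m and a primitive d-th root of unity α ∈ ℂ such that ρ(y₁) ρ(x₁) ρ(y₁)⁻¹ = α·ρ(x₁), and there exists λ ∈ ℂ^× such that ρ(y₁)^d = λ·id_V. -/
open Quandles

/-- The underlying set of the quandle `Q_{n,m}`. -/
inductive Qnm (n m : ℕ) : Type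
  | x : ZMod n → Qnm n m
  | y : ZMod m → Qnm n m

namespace Qnm

variable {n m : ℕ}

/-- The quandle structure on `Q_{n,m}`:
`x_i ◃ y_j = y_{j+1}`, `y_i ◃ x_j = x_{j+1}`, `x_i ◃ x_j = x_j`, `y_i ◃ y_j = y_j`. -/
instance : Quandle (Qnm n m) where
  act a b :=
    match a, b with
    | .x _, .y j => .y (j + 1)
    | .y _, .x j => .x (j + 1)
    | .x _, .x j => .x j
    | .y _, .y j => .y j
  self_distrib := by
    intro a b c
    rcases a with i | i <;> rcases b with j | j <;> rcases c with k | k <;> rfl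
  invAct a b :=
    match a, b with
    | .x _, .y j => .y (j - 1)
    | .y _, .x j => .x (j - 1)
    | .x _, .x j => .x j
    | .y _, .y j => .y j
  left_inv := by
    intro a b
    rcases a with i | i <;> rcases b with j | j <;> simp
  right_inv := by
    intro a b
    rcases a with i | i <;> rcases b with j | j <;> simp
  fix := by
    intro a
    rcases a with i | i <;> rfl

end Qnm

/-- `ρ` is a quandle representation: `ρ(x ◃ y) = ρ(x) ρ(y) ρ(x)⁻¹`. -/
def IsQuandleRep {Q : Type} [Quandle Q] {V : Type} [AddCommGroup V] [Module ℂ V]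
    (ρ : Q → V ≃ₗ[ℂ] V) : Prop :=
  ∀ x y : Q, ρ (x ◃ y) = ρ x * ρ y * (ρ x)⁻¹

/-- The multiplicative map from linear automorphisms to endomorphisms. -/
def qnmToEnd {V : Type} [AddCommGroup V] [Module ℂ V] : (V ≃ₗ[ℂ] V) →* (V →ₗ[ℂ] V) where
  toFun e := e.toLinearMap
  map_one' := rfl
  map_mul' _ _ := rfl

@[simp] lemma qnmToEnd_apply {V : Type} [AddCommGroup V] [Module ℂ V]
    (e : V ≃ₗ[ℂ] V) (v : V) : qnmToEnd e v = e v := rfl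

lemma qnmToEnd_injective {V : Type} [AddCommGroup V] [Module ℂ V] :
    Function.Injective (qnmToEnd (V := V)) :=
  fun _ _ h => LinearEquiv.toLinearMap_injective h

lemma qnmToEnd_ne_zero {V : Type} [AddCommGroup V] [Module ℂ V] [Nontrivial V]
    (e : V ≃ₗ[ℂ] V) : qnmToEnd e ≠ 0 := by
  intro h
  obtain ⟨v, hv⟩ := exists_ne (0 : V)
  apply hv
  have h2 : qnmToEnd e v = 0 := by rw [h]; rfl
  rw [qnmToEnd_apply] at h2
  exact (LinearEquiv.map_eq_zero_iff e).mp h2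

/-- For an irreducible representation `ρ` of `Q_{n,m}` on a finite-dimensional complex
space of dimension at least `2`, there are an integer `d > 1` dividing `n` and `m` and a
primitive `d`-th root of unity `α` with `ρ(y₁) ρ(x₁) ρ(y₁)⁻¹ = α·ρ(x₁)`, and
`ρ(y₁)^d = λ·id` for some nonzero scalar `λ`. -/
theorem qnm_irreducible_rep_structure (n m : ℕ) (hn : 0 < n) (hm : 0 < m)
    {V : Type} [AddCommGroup V] [Module ℂ V] [FiniteDimensional ℂ V]
    (hdim : 2 ≤ Module.finrank ℂ V)
    (ρ : Qnm n m → V ≃ₗ[ℂ] V) (hrep : IsQuandleRep ρ)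
    (hirr : ∀ W : Submodule ℂ V, (∀ q : Qnm n m, ∀ v ∈ W, ρ q v ∈ W) → W = ⊥ ∨ W = ⊤) :
    ∃ d : ℕ, 1 < d ∧ d ∣ n ∧ d ∣ m ∧
      ∃ α : ℂ, IsPrimitiveRoot α d ∧
        ((ρ (Qnm.y 1) * ρ (Qnm.x 1) * (ρ (Qnm.y 1))⁻¹ : V ≃ₗ[ℂ] V) : V →ₗ[ℂ] V) =
          α • ((ρ (Qnm.x 1) : V →ₗ[ℂ] V)) ∧
        ∃ lam : ℂ, lam ≠ 0 ∧
          ((ρ (Qnm.y 1) ^ d : V ≃ₗ[ℂ] V) : V →ₗ[ℂ] V) = lam • LinearMap.id := by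
  haveI : NeZero n := ⟨hn.ne'⟩
  haveI : NeZero m := ⟨hm.ne'⟩
  haveI : Nontrivial V := Module.nontrivial_of_finrank_pos (R := ℂ) (by omega)
  set A := ρ (Qnm.x 1) with hA
  set B := ρ (Qnm.y 1) with hB
  -- basic relations
  have hxx : ∀ i j : ZMod n, Commute (ρ (Qnm.x i)) (ρ (Qnm.x j)) := by
    intro i j
    exact mul_inv_eq_iff_eq_mul.mp (hrep (Qnm.x i) (Qnm.x j)).symm
  have hyy : ∀ i j : ZMod m, Commute (ρ (Qnm.y i)) (ρ (Qnm.y j)) := by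
    intro i j
    exact mul_inv_eq_iff_eq_mul.mp (hrep (Qnm.y i) (Qnm.y j)).symm
  have hyxB : ∀ j : ZMod n, ρ (Qnm.x (j + 1)) = B * ρ (Qnm.x j) * B⁻¹ :=
    fun j => hrep (Qnm.y 1) (Qnm.x j)
  have hxyA : ∀ j : ZMod m, ρ (Qnm.y (j + 1)) = A * ρ (Qnm.y j) * A⁻¹ :=
    fun j => hrep (Qnm.x 1) (Qnm.y j)
  -- shift lemmas
  have shiftx : ∀ k : ℕ, ρ (Qnm.x (1 + (k : ZMod n))) = B ^ k * A * (B ^ k)⁻¹ := by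
    intro k
    induction k with
    | zero => simp [hA]
    | succ k ih =>
      have hc : ((k + 1 : ℕ) : ZMod n) = (k : ZMod n) + 1 := by push_cast; ring
      rw [hc, ← add_assoc, hyxB (1 + (k : ZMod n)), ih]
      group
  have shifty : ∀ k : ℕ, ρ (Qnm.y (1 + (k : ZMod m))) = A ^ k * B * (A ^ k)⁻¹ := by
    intro k
    induction k with
    | zero => simp [hB]
    | succ k ih =>
      have hc : ((k + 1 : ℕ) : ZMod m) = (k : ZMod m) + 1 := by push_cast; ring
      rw [hc, ← add_assoc, hxyA (1 + (k : ZMod m)), ih]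
      group
  have surjx : ∀ j : ZMod n, ∃ k : ℕ, ρ (Qnm.x j) = B ^ k * A * (B ^ k)⁻¹ := by
    intro j
    refine ⟨(j - 1).val, ?_⟩
    have h2 : (1 : ZMod n) + (((j - 1).val : ℕ) : ZMod n) = j := by
      rw [ZMod.natCast_val, ZMod.cast_id]; ring
    have h3 := shiftx (j - 1).val
    rwa [h2] at h3
  have surjy : ∀ j : ZMod m, ∃ k : ℕ, ρ (Qnm.y j) = A ^ k * B * (A ^ k)⁻¹ := by
    intro j
    refine ⟨(j - 1).val, ?_⟩
    have h2 : (1 : ZMod m) + (((j - 1).val : ℕ) : ZMod m) = j := by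
      rw [ZMod.natCast_val, ZMod.cast_id]; ring
    have h3 := shifty (j - 1).val
    rwa [h2] at h3
  -- commuting with A and B implies commuting with everything
  have comm_all : ∀ g : V ≃ₗ[ℂ] V, Commute g A → Commute g B →
      ∀ q : Qnm n m, Commute g (ρ q) := by
    intro g h1 h2 q
    rcases q with j | j
    · obtain ⟨k, hk⟩ := surjx j
      rw [hk]
      exact ((h2.pow_right k).mul_right h1).mul_right (h2.pow_right k).inv_right
    · obtain ⟨k, hk⟩ := surjy j
      rw [hk]
      exact ((h1.pow_right k).mul_right h2).mul_right (h1.pow_right k).inv_right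
  -- Schur's lemma
  have schur : ∀ S : V →ₗ[ℂ] V,
      (∀ q : Qnm n m, S * qnmToEnd (ρ q) = qnmToEnd (ρ q) * S) → ∃ c : ℂ, S = c • 1 := by
    intro S hS
    obtain ⟨c, hc⟩ := Module.End.exists_eigenvalue S
    refine ⟨c, ?_⟩
    have hinv : ∀ q : Qnm n m, ∀ v ∈ Module.End.eigenspace S c,
        ρ q v ∈ Module.End.eigenspace S c := by
      intro q v hv
      rw [Module.End.mem_eigenspace_iff] at hv ⊢
      have h1 : S (ρ q v) = ρ q (S v) := by
        have := DFunLike.congr_fun (hS q) v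
        simpa [Module.End.mul_apply] using this
      rw [h1, hv, map_smul]
    rcases hirr _ hinv with hbot | htop
    · exact absurd hbot (Module.End.hasEigenvalue_iff.mp hc)
    · ext v
      have hv : v ∈ Module.End.eigenspace S c := htop ▸ Submodule.mem_top
      rw [Module.End.mem_eigenspace_iff] at hv
      simpa using hv
  -- the element T = B A B⁻¹ A⁻¹ commutes with everything
  have hTcomm : ∀ q : Qnm n m, Commute (B * A * B⁻¹ * A⁻¹) (ρ q) := by
    intro q
    rcases q with j | j
    · have hT : B * A * B⁻¹ * A⁻¹ = ρ (Qnm.x (1 + 1)) * A⁻¹ := by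
        rw [hyxB 1]
      rw [hT]
      exact (((hxx j (1 + 1)).mul_right (hxx j 1).inv_right)).symm
    · have hT : B * A * B⁻¹ * A⁻¹ = (ρ (Qnm.y (1 + 1)) * B⁻¹)⁻¹ := by
        rw [hxyA 1, ← hB]
        group
      rw [hT]
      exact (((hyy j (1 + 1)).mul_right (hyy j 1).inv_right)).inv_right.symm
  obtain ⟨α, hα⟩ := schur (qnmToEnd (B * A * B⁻¹ * A⁻¹)) (by
    intro q
    rw [← map_mul, ← map_mul, (hTcomm q).eq])
  -- principal relation
  have hE1 : qnmToEnd (B * A * B⁻¹) = α • qnmToEnd A := by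
    have h1 : (B * A * B⁻¹ * A⁻¹) * A = B * A * B⁻¹ := by group
    calc qnmToEnd (B * A * B⁻¹) = qnmToEnd (B * A * B⁻¹ * A⁻¹) * qnmToEnd A := by
          rw [← map_mul, h1]
      _ = (α • 1) * qnmToEnd A := by rw [hα]
      _ = α • qnmToEnd A := by rw [smul_mul_assoc, one_mul]
  have hba : qnmToEnd B * qnmToEnd A = α • (qnmToEnd A * qnmToEnd B) := by
    have h2 : (B * A * B⁻¹) * B = B * A := by group
    calc qnmToEnd B * qnmToEnd A = qnmToEnd (B * A * B⁻¹) * qnmToEnd B := by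
          rw [← map_mul, ← map_mul, h2]
      _ = (α • qnmToEnd A) * qnmToEnd B := by rw [hE1]
      _ = α • (qnmToEnd A * qnmToEnd B) := smul_mul_assoc α _ _
  have hpow : ∀ k : ℕ,
      (qnmToEnd B) ^ k * qnmToEnd A = α ^ k • (qnmToEnd A * (qnmToEnd B) ^ k) := by
    intro k
    induction k with
    | zero => simp
    | succ k ih =>
      calc (qnmToEnd B) ^ (k + 1) * qnmToEnd A
          = qnmToEnd B * ((qnmToEnd B) ^ k * qnmToEnd A) := by
            rw [pow_succ']; rw [mul_assoc]
        _ = qnmToEnd B * (α ^ k • (qnmToEnd A * (qnmToEnd B) ^ k)) := by rw [ih]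
        _ = α ^ k • ((qnmToEnd B * qnmToEnd A) * (qnmToEnd B) ^ k) := by
            rw [mul_smul_comm, mul_assoc]
        _ = α ^ k • ((α • (qnmToEnd A * qnmToEnd B)) * (qnmToEnd B) ^ k) := by rw [hba]
        _ = α ^ (k + 1) • (qnmToEnd A * (qnmToEnd B) ^ (k + 1)) := by
            rw [smul_mul_assoc, smul_smul, mul_assoc, ← pow_succ', ← pow_succ]
  -- α^n = 1
  have hABn : A * B ^ n = B ^ n * A := by
    have hxn : A = B ^ n * A * (B ^ n)⁻¹ := by
      have := shiftx n
      rwa [ZMod.natCast_self, add_zero] at this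
    conv_lhs => rw [hxn]
    group
  have hBnA_ne : (qnmToEnd B) ^ n * qnmToEnd A ≠ 0 := by
    rw [← map_pow, ← map_mul]
    exact qnmToEnd_ne_zero _
  have hαn : α ^ n = 1 := by
    have h6 : (qnmToEnd B) ^ n * qnmToEnd A
        = α ^ n • ((qnmToEnd B) ^ n * qnmToEnd A) := by
      have h7 : qnmToEnd A * (qnmToEnd B) ^ n = (qnmToEnd B) ^ n * qnmToEnd A := by
        rw [← map_pow, ← map_mul, ← map_mul, hABn]
      conv_lhs => rw [hpow n, h7]
    have h8 : (α ^ n - 1) • ((qnmToEnd B) ^ n * qnmToEnd A) = 0 := by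
      rw [sub_smul, one_smul, ← h6, sub_self]
    rcases smul_eq_zero.mp h8 with h | h
    · exact sub_eq_zero.mp h
    · exact absurd h hBnA_ne
  have hα0 : α ≠ 0 := by
    intro h
    rw [h, zero_pow hn.ne'] at hαn
    exact zero_ne_one hαn
  -- α^m = 1
  have hab : qnmToEnd A * qnmToEnd B = α⁻¹ • (qnmToEnd B * qnmToEnd A) := by
    rw [hba, smul_smul, inv_mul_cancel₀ hα0, one_smul]
  have hpow2 : ∀ k : ℕ,
      (qnmToEnd A) ^ k * qnmToEnd B = (α⁻¹) ^ k • (qnmToEnd B * (qnmToEnd A) ^ k) := by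
    intro k
    induction k with
    | zero => simp
    | succ k ih =>
      calc (qnmToEnd A) ^ (k + 1) * qnmToEnd B
          = qnmToEnd A * ((qnmToEnd A) ^ k * qnmToEnd B) := by
            rw [pow_succ']; rw [mul_assoc]
        _ = qnmToEnd A * ((α⁻¹) ^ k • (qnmToEnd B * (qnmToEnd A) ^ k)) := by rw [ih]
        _ = (α⁻¹) ^ k • ((qnmToEnd A * qnmToEnd B) * (qnmToEnd A) ^ k) := by
            rw [mul_smul_comm, mul_assoc]
        _ = (α⁻¹) ^ k • ((α⁻¹ • (qnmToEnd B * qnmToEnd A)) * (qnmToEnd A) ^ k) := by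
            rw [hab]
        _ = (α⁻¹) ^ (k + 1) • (qnmToEnd B * (qnmToEnd A) ^ (k + 1)) := by
            rw [smul_mul_assoc, smul_smul, mul_assoc, ← pow_succ', ← pow_succ]
  have hBAm : B * A ^ m = A ^ m * B := by
    have hym : B = A ^ m * B * (A ^ m)⁻¹ := by
      have := shifty m
      rwa [ZMod.natCast_self, add_zero] at this
    conv_lhs => rw [hym]
    group
  have hAmB_ne : (qnmToEnd A) ^ m * qnmToEnd B ≠ 0 := by
    rw [← map_pow, ← map_mul]
    exact qnmToEnd_ne_zero _
  have hαm : α ^ m = 1 := by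
    have h6 : (qnmToEnd A) ^ m * qnmToEnd B
        = (α⁻¹) ^ m • ((qnmToEnd A) ^ m * qnmToEnd B) := by
      have h7 : qnmToEnd B * (qnmToEnd A) ^ m = (qnmToEnd A) ^ m * qnmToEnd B := by
        rw [← map_pow, ← map_mul, ← map_mul, hBAm]
      conv_lhs => rw [hpow2 m, h7]
    have h8 : ((α⁻¹) ^ m - 1) • ((qnmToEnd A) ^ m * qnmToEnd B) = 0 := by
      rw [sub_smul, one_smul, ← h6, sub_self]
    rcases smul_eq_zero.mp h8 with h | h
    · have h9 : (α⁻¹) ^ m = 1 := sub_eq_zero.mp h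
      rw [inv_pow] at h9
      exact inv_eq_one.mp h9
    · exact absurd h hAmB_ne
  -- define d
  have hfin : IsOfFinOrder α := isOfFinOrder_iff_pow_eq_one.mpr ⟨n, hn, hαn⟩
  refine ⟨orderOf α, ?_, orderOf_dvd_of_pow_eq_one hαn, orderOf_dvd_of_pow_eq_one hαm,
    α, ⟨pow_orderOf_eq_one α, fun l hl => orderOf_dvd_of_pow_eq_one hl⟩, ?_, ?_⟩
  · -- 1 < orderOf α
    by_contra hle
    push_neg at hle
    have hd0 : orderOf α ≠ 0 := hfin.orderOf_pos.ne'
    have hd1 : orderOf α = 1 := by omega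
    have hα1 : α = 1 := orderOf_eq_one_iff.mp hd1
    -- then A and B commute and everything is scalar
    have hcommAB : Commute A B := by
      have h9 : B * A * B⁻¹ = A := by
        apply qnmToEnd_injective
        rw [hE1, hα1, one_smul]
      exact (mul_inv_eq_iff_eq_mul.mp h9).symm
    obtain ⟨c₁, hc₁⟩ := schur (qnmToEnd A) (by
      intro q
      rw [← map_mul, ← map_mul, (comm_all A (Commute.refl A) hcommAB q).eq])
    obtain ⟨c₂, hc₂⟩ := schur (qnmToEnd B) (by
      intro q
      rw [← map_mul, ← map_mul, (comm_all B hcommAB.symm (Commute.refl B) q).eq])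
    have hscal : ∀ q : Qnm n m, ∃ c : ℂ, qnmToEnd (ρ q) = c • 1 := by
      intro q
      rcases q with j | j
      · obtain ⟨k, hk⟩ := surjx j
        refine ⟨c₁, ?_⟩
        calc qnmToEnd (ρ (Qnm.x j))
            = qnmToEnd (B ^ k) * qnmToEnd A * qnmToEnd ((B ^ k)⁻¹) := by
              rw [hk, map_mul, map_mul]
          _ = qnmToEnd (B ^ k) * (c₁ • 1) * qnmToEnd ((B ^ k)⁻¹) := by rw [hc₁]
          _ = c₁ • (qnmToEnd (B ^ k) * qnmToEnd ((B ^ k)⁻¹)) := by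
              rw [mul_smul_comm, mul_one, smul_mul_assoc]
          _ = c₁ • 1 := by rw [← map_mul, mul_inv_cancel, map_one]
      · obtain ⟨k, hk⟩ := surjy j
        refine ⟨c₂, ?_⟩
        calc qnmToEnd (ρ (Qnm.y j))
            = qnmToEnd (A ^ k) * qnmToEnd B * qnmToEnd ((A ^ k)⁻¹) := by
              rw [hk, map_mul, map_mul]
          _ = qnmToEnd (A ^ k) * (c₂ • 1) * qnmToEnd ((A ^ k)⁻¹) := by rw [hc₂]
          _ = c₂ • (qnmToEnd (A ^ k) * qnmToEnd ((A ^ k)⁻¹)) := by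
              rw [mul_smul_comm, mul_one, smul_mul_assoc]
          _ = c₂ • 1 := by rw [← map_mul, mul_inv_cancel, map_one]
    obtain ⟨v, hv⟩ := exists_ne (0 : V)
    have hWinv : ∀ q : Qnm n m, ∀ w ∈ Submodule.span ℂ {v}, ρ q w ∈ Submodule.span ℂ {v} := by
      intro q w hw
      obtain ⟨c, hc⟩ := hscal q
      have h10 : ρ q w = c • w := by
        have := DFunLike.congr_fun hc w
        simpa using this
      rw [h10]
      exact Submodule.smul_mem _ _ hw
    rcases hirr _ hWinv with h | h
    · exact hv (by
        have : v ∈ Submodule.span ℂ {v} := Submodule.mem_span_singleton_self v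
        rw [h] at this
        simpa using this)
    · have hf := finrank_span_singleton (K := ℂ) hv
      rw [h, finrank_top] at hf
      omega
  · exact hE1
  · -- B^(orderOf α) is scalar
    have hαd : α ^ orderOf α = 1 := pow_orderOf_eq_one α
    have hBdA : Commute (B ^ orderOf α) A := by
      have h11 : B ^ orderOf α * A = A * B ^ orderOf α := by
        apply qnmToEnd_injective
        rw [map_mul, map_mul, map_pow, hpow (orderOf α), hαd, one_smul]
      exact h11
    obtain ⟨lam, hlam⟩ := schur (qnmToEnd (B ^ orderOf α)) (by
      intro q
      rw [← map_mul, ← map_mul,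
        (comm_all (B ^ orderOf α) hBdA ((Commute.refl B).pow_left (orderOf α)) q).eq])
    refine ⟨lam, ?_, hlam⟩
    intro h0
    rw [h0, zero_smul] at hlam
    exact qnmToEnd_ne_zero _ hlam
end

section
/- Let n, m be positive integers, let d > 1 be an integer dividing both n and m, let α ∈ ℂ be a primitive d-th root of unity, and let λ, β ∈ ℂ^×. Let A ∈ GL_d(ℂ) be the diagonal matrix with diagonal entries β, β α⁻¹, …, β α^{-(d-1)}, and let B ∈ GL_d(ℂ) be the matrix whose (i+1, i) entries equal 1 for 1 ≤ i ≤ d−1, whose (1, d) entry equals λ, and whose other entries are 0. Then there exists a unique quandle representation ρ : Q_{n,m} → GL_d(ℂ) with ρ(x₁) = A and ρ(y₁) = B; it satisfies ρ(x_i) = α^{i−1}·A for all i ∈ ℤ/nℤ and ρ(y_j) = α^{1−j}·B for all j ∈ ℤ/mℤ, and it is irreducible. -/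
open Quandles

open Fin.NatCast

section Helpers

private lemma qnm_pow_eq_pow_of_modEq {α : ℂ} {N : ℕ} (h : α ^ N = 1) {a b : ℕ}
    (hab : a ≡ b [MOD N]) : α ^ a = α ^ b := by
  have key : ∀ t : ℕ, α ^ t = α ^ (t % N) := by
    intro t
    conv_lhs => rw [← Nat.div_add_mod t N]
    rw [pow_add, pow_mul, h, one_pow, one_mul]
  rw [key a, key b, show a % N = b % N from hab]

private lemma zmod_val_modEq {m : ℕ} [NeZero m] (c : ZMod m) :
    (c - 1).val + 1 ≡ c.val [MOD m] := by
  apply (ZMod.natCast_eq_natCast_iff ((c - 1).val + 1) c.val m).mp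
  push_cast
  simp [ZMod.natCast_val, ZMod.cast_id]

end Helpers

/-- There is a unique quandle representation `ρ : Q_{n,m} → GL_d(ℂ)` with
`ρ(x₁) = A` and `ρ(y₁) = B`; it satisfies `ρ(x_i) = α^{i-1}·A`, `ρ(y_j) = α^{1-j}·B`,
and it is irreducible. -/
theorem qnm_rep_of_matrices (n m d : ℕ) (hn : 0 < n) (hm : 0 < m)
    (hd : 1 < d) (hdn : d ∣ n) (hdm : d ∣ m)
    (α : ℂ) (hα : IsPrimitiveRoot α d)
    (lam beta : ℂ) (hlam : lam ≠ 0) (hbeta : beta ≠ 0)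
    (A B : Matrix (Fin d) (Fin d) ℂ)
    (hA : A = Matrix.diagonal fun i : Fin d => beta * α⁻¹ ^ (i : ℕ))
    (hB : B = Matrix.of fun i j : Fin d =>
      if (i : ℕ) = (j : ℕ) + 1 then 1
      else if (i : ℕ) = 0 ∧ (j : ℕ) = d - 1 then lam else 0) :
    (∃! ρ : Qnm n m → Matrix.GeneralLinearGroup (Fin d) ℂ,
        (∀ a b : Qnm n m, ρ (a ◃ b) = ρ a * ρ b * (ρ a)⁻¹) ∧
        (ρ (Qnm.x 1) : Matrix (Fin d) (Fin d) ℂ) = A ∧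
        (ρ (Qnm.y 1) : Matrix (Fin d) (Fin d) ℂ) = B) ∧
      ∀ ρ : Qnm n m → Matrix.GeneralLinearGroup (Fin d) ℂ,
        (∀ a b : Qnm n m, ρ (a ◃ b) = ρ a * ρ b * (ρ a)⁻¹) →
        (ρ (Qnm.x 1) : Matrix (Fin d) (Fin d) ℂ) = A →
        (ρ (Qnm.y 1) : Matrix (Fin d) (Fin d) ℂ) = B →
        (∀ i : ZMod n, (ρ (Qnm.x i) : Matrix (Fin d) (Fin d) ℂ) = α ^ (i - 1).val • A) ∧
        (∀ j : ZMod m, (ρ (Qnm.y j) : Matrix (Fin d) (Fin d) ℂ) = α ^ (1 - j).val • B) ∧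
        ∀ W : Submodule ℂ (Fin d → ℂ),
          (∀ q : Qnm n m, ∀ v ∈ W, (ρ q : Matrix (Fin d) (Fin d) ℂ).mulVec v ∈ W) →
          W = ⊥ ∨ W = ⊤ := by
  haveI : NeZero n := ⟨hn.ne'⟩
  haveI : NeZero m := ⟨hm.ne'⟩
  haveI : NeZero d := ⟨by omega⟩
  have hd0 : d ≠ 0 := by omega
  have hα1 : α ^ d = 1 := hα.pow_eq_one
  have hα0 : α ≠ 0 := by
    intro h; rw [h, zero_pow hd0] at hα1; exact zero_ne_one hα1
  have hαinv : α⁻¹ ^ d = 1 := by rw [inv_pow, hα1, inv_one]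
  have hαn : α ^ n = 1 := by
    obtain ⟨k, rfl⟩ := hdn; rw [pow_mul, hα1, one_pow]
  have hαm : α ^ m = 1 := by
    obtain ⟨k, rfl⟩ := hdm; rw [pow_mul, hα1, one_pow]
  set c : Fin d → ℂ := fun i => beta * α⁻¹ ^ (i : ℕ) with hcdef
  have hcne : ∀ i, c i ≠ 0 := fun i =>
    mul_ne_zero hbeta (pow_ne_zero _ (inv_ne_zero hα0))
  have hAd : A = Matrix.diagonal c := hA
  set g : Fin d → ℂ := fun j => if (j : ℕ) = d - 1 then lam else 1 with hgdef
  have hgne : ∀ j, g j ≠ 0 := by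
    intro j; simp only [hgdef]; split <;> simp [hlam]
  -- the clean form of B
  have hBf : ∀ i j : Fin d, B i j = if i = j + 1 then g j else 0 := by
    intro i j
    have hi := i.isLt
    have hj := j.isLt
    have hadd : ((j + 1 : Fin d) : ℕ) = ((j : ℕ) + 1) % d := by
      rw [Fin.add_def]
      simp [Fin.val_one', Nat.mod_eq_of_lt hd]
    rw [hB]
    simp only [Matrix.of_apply, hgdef]
    by_cases hjl : (j : ℕ) = d - 1
    · have h1 : ((j + 1 : Fin d) : ℕ) = 0 := by
        rw [hadd, hjl, Nat.sub_add_cancel (by omega), Nat.mod_self]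
      have h2 : ¬ ((i : ℕ) = (j : ℕ) + 1) := by omega
      rw [if_neg h2, if_pos hjl]
      by_cases h3 : i = j + 1
      · have : (i : ℕ) = 0 := by rw [h3, h1]
        rw [if_pos h3, if_pos ⟨this, hjl⟩]
      · have : ¬ ((i : ℕ) = 0) := by
          intro h0
          exact h3 (Fin.ext (by rw [h1, h0]))
        rw [if_neg h3, if_neg (by tauto)]
    · have h1 : ((j + 1 : Fin d) : ℕ) = (j : ℕ) + 1 := by
        rw [hadd, Nat.mod_eq_of_lt (by omega)]
      have heqiff : i = j + 1 ↔ (i : ℕ) = (j : ℕ) + 1 := by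
        rw [Fin.ext_iff, h1]
      rw [if_neg hjl]
      by_cases h3 : (i : ℕ) = (j : ℕ) + 1
      · rw [if_pos h3, if_pos (heqiff.mpr h3)]
      · rw [if_neg h3, if_neg (fun h => h3 (heqiff.mp h)), if_neg (by tauto)]
  -- key commutation relation
  have hαdm1 : α⁻¹ ^ (d - 1) = α := by
    have h1 : α⁻¹ ^ (d - 1) * α⁻¹ = 1 := by
      rw [← pow_succ, Nat.sub_add_cancel (by omega), hαinv]
    have := eq_inv_of_mul_eq_one_left h1
    rw [inv_inv] at this
    exact this
  have hkey : B * A = α • (A * B) := by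
    ext i j
    rw [hAd, Matrix.smul_apply, Matrix.mul_diagonal, Matrix.diagonal_mul, hBf i j, smul_eq_mul]
    rcases eq_or_ne i (j + 1) with h | h
    · rw [if_pos h]
      have hival : (i : ℕ) = ((j : ℕ) + 1) % d := by
        rw [h, Fin.add_def]; simp [Fin.val_one', Nat.mod_eq_of_lt hd]
      by_cases hjl : (j : ℕ) = d - 1
      · have h0 : (i : ℕ) = 0 := by
          rw [hival, hjl, Nat.sub_add_cancel (by omega), Nat.mod_self]
        simp only [hcdef, h0, hjl, pow_zero, mul_one, hαdm1]
        ring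
      · have h0 : (i : ℕ) = (j : ℕ) + 1 := by
          rw [hival]; exact Nat.mod_eq_of_lt (by omega)
        simp only [hcdef, h0, pow_succ]
        field_simp
    · rw [if_neg h]; ring
  have hkey' : A * B = α⁻¹ • (B * A) := by
    rw [hkey, smul_smul, inv_mul_cancel₀ hα0, one_smul]
  -- units
  have hAright : A * Matrix.diagonal (fun i => (c i)⁻¹) = 1 := by
    rw [hAd, Matrix.diagonal_mul_diagonal]
    have h1 : (fun i => c i * (c i)⁻¹) = fun _ : Fin d => (1 : ℂ) :=
      funext fun i => mul_inv_cancel₀ (hcne i)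
    rw [h1, Matrix.diagonal_one]
  have hAleft : Matrix.diagonal (fun i => (c i)⁻¹) * A = 1 := by
    rw [hAd, Matrix.diagonal_mul_diagonal]
    have h1 : (fun i => (c i)⁻¹ * c i) = fun _ : Fin d => (1 : ℂ) :=
      funext fun i => inv_mul_cancel₀ (hcne i)
    rw [h1, Matrix.diagonal_one]
  set Bi : Matrix (Fin d) (Fin d) ℂ :=
    Matrix.of (fun i j => if j = i + 1 then (g i)⁻¹ else 0) with hBidef
  have hBif : ∀ i j : Fin d, Bi i j = if j = i + 1 then (g i)⁻¹ else 0 := fun i j => rfl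
  have hgg : ∀ k : Fin d, g k * (g k)⁻¹ = 1 := fun k => mul_inv_cancel₀ (hgne k)
  have hBright : B * Bi = 1 := by
    ext i j
    rw [Matrix.mul_apply]
    rw [Finset.sum_eq_single (i - 1)]
    · rw [hBf, hBif, sub_add_cancel, if_pos rfl]
      rcases eq_or_ne i j with rfl | hij
      · rw [if_pos rfl, Matrix.one_apply_eq, hgg]
      · rw [if_neg (Ne.symm hij), mul_zero, Matrix.one_apply_ne hij]
    · intro k _ hk
      rw [hBf, if_neg, zero_mul]
      intro h
      exact hk (eq_sub_of_add_eq h.symm)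
    · intro h
      exact absurd (Finset.mem_univ _) h
  have hBleft : Bi * B = 1 := by
    ext i j
    rw [Matrix.mul_apply]
    rw [Finset.sum_eq_single (i + 1)]
    · rw [hBf, hBif, if_pos rfl]
      rcases eq_or_ne i j with rfl | hij
      · rw [if_pos rfl, Matrix.one_apply_eq, inv_mul_cancel₀ (hgne i)]
      · rw [if_neg (fun h => hij (add_left_injective 1 h)), mul_zero,
          Matrix.one_apply_ne hij]
    · intro k _ hk
      rw [hBif, if_neg hk, zero_mul]
    · intro h
      exact absurd (Finset.mem_univ _) h
  have hforall : ∀ ρ : Qnm n m → Matrix.GeneralLinearGroup (Fin d) ℂ,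
      (∀ a b : Qnm n m, ρ (a ◃ b) = ρ a * ρ b * (ρ a)⁻¹) →
      (ρ (Qnm.x 1) : Matrix (Fin d) (Fin d) ℂ) = A →
      (ρ (Qnm.y 1) : Matrix (Fin d) (Fin d) ℂ) = B →
      (∀ i : ZMod n, (ρ (Qnm.x i) : Matrix (Fin d) (Fin d) ℂ) = α ^ (i - 1).val • A) ∧
      (∀ j : ZMod m, (ρ (Qnm.y j) : Matrix (Fin d) (Fin d) ℂ) = α ^ (1 - j).val • B) ∧
      ∀ W : Submodule ℂ (Fin d → ℂ),
        (∀ q : Qnm n m, ∀ v ∈ W, (ρ q : Matrix (Fin d) (Fin d) ℂ).mulVec v ∈ W) →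
        W = ⊥ ∨ W = ⊤ := by
    intro ρ hrep hx1 hy1
    have hxk : ∀ k : ℕ,
        (ρ (Qnm.x (1 + (k : ZMod n))) : Matrix (Fin d) (Fin d) ℂ) = α ^ k • A := by
      intro k
      induction k with
      | zero => simpa using hx1
      | succ k ih =>
        have hact : (Qnm.y (1 : ZMod m)) ◃ (Qnm.x (1 + (k : ZMod n)))
            = Qnm.x (1 + ((k + 1 : ℕ) : ZMod n)) := by
          show Qnm.x (1 + (k : ZMod n) + 1) = _
          congr 1
          push_cast
          ring
        have h1 := hrep (Qnm.y (1 : ZMod m)) (Qnm.x (1 + (k : ZMod n)))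
        rw [hact] at h1
        have hmove : (ρ (Qnm.y 1) : Matrix (Fin d) (Fin d) ℂ)
              * (ρ (Qnm.x (1 + (k : ZMod n))) : Matrix (Fin d) (Fin d) ℂ)
            = (α ^ (k + 1) • A) * (ρ (Qnm.y 1) : Matrix (Fin d) (Fin d) ℂ) := by
          rw [hy1, ih, mul_smul_comm, hkey, smul_smul, ← pow_succ, ← smul_mul_assoc]
        rw [h1, Units.val_mul, Units.val_mul, hmove, mul_assoc, Units.mul_inv, mul_one]
    have hx : ∀ i : ZMod n,
        (ρ (Qnm.x i) : Matrix (Fin d) (Fin d) ℂ) = α ^ (i - 1).val • A := by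
      intro i
      have h1 := hxk (i - 1).val
      rwa [show (1 + (((i - 1).val : ℕ) : ZMod n)) = i by
        rw [ZMod.natCast_val, ZMod.cast_id]; ring] at h1
    have hyk : ∀ k : ℕ,
        (ρ (Qnm.y (1 + (k : ZMod m))) : Matrix (Fin d) (Fin d) ℂ) = α⁻¹ ^ k • B := by
      intro k
      induction k with
      | zero => simpa using hy1
      | succ k ih =>
        have hact : (Qnm.x (1 : ZMod n)) ◃ (Qnm.y (1 + (k : ZMod m)))
            = Qnm.y (1 + ((k + 1 : ℕ) : ZMod m)) := by
          show Qnm.y (1 + (k : ZMod m) + 1) = _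
          congr 1
          push_cast
          ring
        have h1 := hrep (Qnm.x (1 : ZMod n)) (Qnm.y (1 + (k : ZMod m)))
        rw [hact] at h1
        have hmove : (ρ (Qnm.x 1) : Matrix (Fin d) (Fin d) ℂ)
              * (ρ (Qnm.y (1 + (k : ZMod m))) : Matrix (Fin d) (Fin d) ℂ)
            = (α⁻¹ ^ (k + 1) • B) * (ρ (Qnm.x 1) : Matrix (Fin d) (Fin d) ℂ) := by
          rw [hx1, ih, mul_smul_comm, hkey', smul_smul, ← pow_succ, ← smul_mul_assoc]
        rw [h1, Units.val_mul, Units.val_mul, hmove, mul_assoc, Units.mul_inv, mul_one]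
    have hpowswap : ∀ j : ZMod m, α ^ (1 - j).val = α⁻¹ ^ (j - 1).val := by
      intro j
      have hsum : α ^ ((1 - j).val + (j - 1).val) = 1 := by
        have hmod : ((1 - j).val + (j - 1).val) ≡ 0 [MOD m] := by
          have := (ZMod.natCast_eq_natCast_iff ((1 - j).val + (j - 1).val) 0 m).mp
          apply this
          push_cast
          simp only [ZMod.natCast_val, ZMod.cast_id]
          ring
        rw [qnm_pow_eq_pow_of_modEq hαm hmod, pow_zero]
      rw [pow_add] at hsum
      rw [eq_inv_of_mul_eq_one_left hsum, inv_pow]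
    have hy : ∀ j : ZMod m,
        (ρ (Qnm.y j) : Matrix (Fin d) (Fin d) ℂ) = α ^ (1 - j).val • B := by
      intro j
      have h1 := hyk (j - 1).val
      rw [show (1 + (((j - 1).val : ℕ) : ZMod m)) = j by
        rw [ZMod.natCast_val, ZMod.cast_id]; ring] at h1
      rw [h1, hpowswap]
    refine ⟨hx, hy, ?_⟩
    intro W hW
    by_cases hbot : W = ⊥
    · exact Or.inl hbot
    right
    obtain ⟨v, hvW, hv0⟩ := (Submodule.ne_bot_iff W).mp hbot
    obtain ⟨i0, hvi0p⟩ := Function.ne_iff.mp hv0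
    have hvi0 : v i0 ≠ 0 := by simpa using hvi0p
    have hAW : ∀ u ∈ W, (Matrix.diagonal c).mulVec u ∈ W := by
      intro u hu
      have h1 := hW (Qnm.x 1) u hu
      rwa [hx1, hAd] at h1
    have hBW : ∀ u ∈ W, B.mulVec u ∈ W := by
      intro u hu
      have h1 := hW (Qnm.y 1) u hu
      rwa [hy1] at h1
    have hstep : ∀ u ∈ W, ∀ a : Fin d, (fun k => (c k - c a) * u k) ∈ W := by
      intro u hu a
      have h2 := W.sub_mem (hAW u hu) (W.smul_mem (c a) hu)
      have h3 : (fun k => (c k - c a) * u k)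
          = (Matrix.diagonal c).mulVec u - c a • u := by
        funext k
        simp only [Pi.sub_apply, Pi.smul_apply, Matrix.mulVec_diagonal, smul_eq_mul]
        ring
      rw [h3]
      exact h2
    have hprod : ∀ s : Finset (Fin d),
        (fun k => (∏ j ∈ s, (c k - c j)) * v k) ∈ W := by
      intro s
      induction s using Finset.induction_on with
      | empty => simpa using hvW
      | @insert a s ha ih =>
        have h1 := hstep _ ih a
        have h2 : (fun k => (∏ j ∈ insert a s, (c k - c j)) * v k)
            = fun k => (c k - c a) * ((∏ j ∈ s, (c k - c j)) * v k) := by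
          funext k
          rw [Finset.prod_insert ha]
          ring
        rw [h2]
        exact h1
    have hcinj : ∀ i j : Fin d, i ≠ j → c i ≠ c j := by
      intro i j hij hc
      apply hij
      simp only [hcdef] at hc
      have h1 : α⁻¹ ^ (i : ℕ) = α⁻¹ ^ (j : ℕ) := mul_left_cancel₀ hbeta hc
      exact Fin.ext (hα.inv.pow_inj i.isLt j.isLt h1)
    set w : Fin d → ℂ := fun k => (∏ j ∈ Finset.univ.erase i0, (c k - c j)) * v k with hwdef
    have hwW : w ∈ W := hprod _
    have hwi : w i0 ≠ 0 := by
      apply mul_ne_zero _ hvi0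
      rw [Finset.prod_ne_zero_iff]
      intro a ha
      exact sub_ne_zero.mpr (hcinj i0 a (Finset.ne_of_mem_erase ha).symm)
    have hwj : ∀ k, k ≠ i0 → w k = 0 := by
      intro k hk
      have h1 : (∏ j ∈ Finset.univ.erase i0, (c k - c j)) = 0 :=
        Finset.prod_eq_zero (Finset.mem_erase.mpr ⟨hk, Finset.mem_univ k⟩) (sub_self _)
      simp [hwdef, h1]
    have hsingle0 : Pi.single i0 (1 : ℂ) ∈ W := by
      have h1 : Pi.single i0 (1 : ℂ) = (w i0)⁻¹ • w := by
        funext k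
        rcases eq_or_ne k i0 with rfl | hk
        · rw [Pi.single_eq_same, Pi.smul_apply, smul_eq_mul, inv_mul_cancel₀ hwi]
        · rw [Pi.single_eq_of_ne hk, Pi.smul_apply, hwj k hk, smul_zero]
      rw [h1]
      exact W.smul_mem _ hwW
    have hshift : ∀ j : Fin d, Pi.single j (1 : ℂ) ∈ W → Pi.single (j + 1) (1 : ℂ) ∈ W := by
      intro j hj
      have h1 := hBW _ hj
      have h2 : B.mulVec (Pi.single j 1) = g j • (Pi.single (j + 1) (1 : ℂ) : Fin d → ℂ) := by
        rw [Matrix.mulVec_single_one]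
        funext i
        show B i j = (g j • Pi.single (j + 1) (1 : ℂ)) i
        rw [hBf, Pi.smul_apply, Pi.single_apply, smul_eq_mul]
        split_ifs <;> simp
      have h3 : (Pi.single (j + 1) (1 : ℂ) : Fin d → ℂ) = (g j)⁻¹ • B.mulVec (Pi.single j 1) := by
        rw [h2, smul_smul, inv_mul_cancel₀ (hgne j), one_smul]
      rw [h3]
      exact W.smul_mem _ h1
    have hallk : ∀ k : ℕ, Pi.single (i0 + (k : Fin d)) (1 : ℂ) ∈ W := by
      intro k
      induction k with
      | zero => simpa using hsingle0
      | succ k ih =>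
        have h1 : (((k + 1 : ℕ) : Fin d)) = (k : Fin d) + 1 := by push_cast; ring
        rw [h1, ← add_assoc]
        exact hshift _ ih
    have hall : ∀ j : Fin d, Pi.single j (1 : ℂ) ∈ W := by
      intro j
      have h1 := hallk (j - i0).val
      have h2 : i0 + (((j - i0).val : ℕ) : Fin d) = j := by
        rw [Fin.cast_val_eq_self]; abel
      rwa [h2] at h1
    rw [eq_top_iff]
    intro u _
    have h1 : u = ∑ j : Fin d, Pi.single j (u j) := (Finset.univ_sum_single u).symm
    rw [h1]
    apply Submodule.sum_mem
    intro j _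
    have h2 : Pi.single j (u j) = u j • (Pi.single j (1 : ℂ) : Fin d → ℂ) := by
      rw [← Pi.single_smul, smul_eq_mul, mul_one]
    rw [h2]
    exact W.smul_mem _ (hall j)
  -- construction of the representation
  have hpowne : ∀ t : ℕ, α ^ t ≠ 0 := fun t => pow_ne_zero t hα0
  have hmk : ∀ (r : ℂ), r ≠ 0 → ∀ (M N : Matrix (Fin d) (Fin d) ℂ), M * N = 1 →
      (r • M) * (r⁻¹ • N) = 1 := by
    intro r hr M N hMN
    rw [smul_mul_smul_comm, mul_inv_cancel₀ hr, hMN, one_smul]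
  have hmk' : ∀ (r : ℂ), r ≠ 0 → ∀ (M N : Matrix (Fin d) (Fin d) ℂ), N * M = 1 →
      (r⁻¹ • N) * (r • M) = 1 := by
    intro r hr M N hMN
    rw [smul_mul_smul_comm, inv_mul_cancel₀ hr, hMN, one_smul]
  let ρ₀ : Qnm n m → Matrix.GeneralLinearGroup (Fin d) ℂ := fun q =>
    match q with
    | .x i => Units.mk (α ^ (i - 1).val • A)
        ((α ^ (i - 1).val)⁻¹ • Matrix.diagonal (fun i => (c i)⁻¹))
        (hmk _ (hpowne _) _ _ hAright) (hmk' _ (hpowne _) _ _ hAleft)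
    | .y j => Units.mk (α ^ (1 - j).val • B) ((α ^ (1 - j).val)⁻¹ • Bi)
        (hmk _ (hpowne _) _ _ hBright) (hmk' _ (hpowne _) _ _ hBleft)
  have hρ₀x : ∀ i : ZMod n,
      (ρ₀ (Qnm.x i) : Matrix (Fin d) (Fin d) ℂ) = α ^ (i - 1).val • A := fun _ => rfl
  have hρ₀y : ∀ j : ZMod m,
      (ρ₀ (Qnm.y j) : Matrix (Fin d) (Fin d) ℂ) = α ^ (1 - j).val • B := fun _ => rfl
  have hρ₀x1 : (ρ₀ (Qnm.x 1) : Matrix (Fin d) (Fin d) ℂ) = A := by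
    rw [hρ₀x, sub_self, ZMod.val_zero, pow_zero, one_smul]
  have hρ₀y1 : (ρ₀ (Qnm.y 1) : Matrix (Fin d) (Fin d) ℂ) = B := by
    rw [hρ₀y, sub_self, ZMod.val_zero, pow_zero, one_smul]
  have hrep₀ : ∀ a b : Qnm n m, ρ₀ (a ◃ b) = ρ₀ a * ρ₀ b * (ρ₀ a)⁻¹ := by
    intro a b
    rw [eq_mul_inv_iff_mul_eq]
    apply Units.ext
    rcases a with i | i <;> rcases b with j | j
    · rw [show (Qnm.x i ◃ Qnm.x j : Qnm n m) = Qnm.x j from rfl]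
      rw [Units.val_mul, Units.val_mul, hρ₀x, hρ₀x,
        smul_mul_smul_comm, smul_mul_smul_comm, mul_comm (α ^ (j - 1).val)]
    · rw [show (Qnm.x i ◃ Qnm.y j : Qnm n m) = Qnm.y (j + 1) from rfl]
      rw [Units.val_mul, Units.val_mul, hρ₀y, hρ₀x, hρ₀y,
        smul_mul_smul_comm, smul_mul_smul_comm, hkey, smul_smul]
      congr 1
      have e1 : α ^ ((1 : ZMod m) - (j + 1)).val * α = α ^ ((1 : ZMod m) - j).val := by
        rw [show (1 : ZMod m) - (j + 1) = (1 - j) - 1 from by ring, ← pow_succ]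
        exact qnm_pow_eq_pow_of_modEq hαm (zmod_val_modEq (1 - j))
      rw [← e1]
      ring
    · rw [show (Qnm.y i ◃ Qnm.x j : Qnm n m) = Qnm.x (j + 1) from rfl]
      rw [Units.val_mul, Units.val_mul, hρ₀x, hρ₀y, hρ₀x,
        smul_mul_smul_comm, smul_mul_smul_comm, hkey, smul_smul]
      congr 1
      have e2 : α ^ ((j : ZMod n) - 1).val * α = α ^ (j : ZMod n).val := by
        rw [← pow_succ]
        exact qnm_pow_eq_pow_of_modEq hαn (zmod_val_modEq j)
      rw [show (j + 1 - 1 : ZMod n) = j from by ring, ← e2]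
      ring
    · rw [show (Qnm.y i ◃ Qnm.y j : Qnm n m) = Qnm.y j from rfl]
      rw [Units.val_mul, Units.val_mul, hρ₀y, hρ₀y,
        smul_mul_smul_comm, smul_mul_smul_comm, mul_comm (α ^ (1 - j).val)]
  refine ⟨⟨ρ₀, ⟨hrep₀, hρ₀x1, hρ₀y1⟩, ?_⟩, hforall⟩
  intro ρ' h'
  obtain ⟨h1, h2, h3⟩ := h'
  obtain ⟨hx', hy', _⟩ := hforall ρ' h1 h2 h3
  funext q
  apply Units.ext
  rcases q with i | j
  · rw [hx' i, hρ₀x i]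
  · rw [hy' j, hρ₀y j]
end
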